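/- Let X and Y be bounded geometry metric spaces, at least one of which is non-amenable, and let f : X → Y be a coarse equivalence. Then there exists a bijective coarse equivalence h : X → Y which is close to f, i.e. sup_{x∈X} d_Y(f(x), h(x)) < ∞. -/

import Mathlib

/- Common definitions for formalising "Cartan subalgebras of uniform Roe algebras"
   (White–Willett).  We model C*-subalgebras of B(H) as norm-closed sets of
   continuous linear operators underlying non-unital star subalgebras. -/

open scoped InnerProductSpace ENNReal
open Filter

noncomputable section

universe u v

namespace RoeCartan

variable {H : Type u} [NormedAddCommGroup H] [InnerProductSpace ℂ H] [CompleteSpace H]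

/-- A (possibly non-unital) C*-subalgebra of `B(H)`, viewed as a set of operators:
a norm-closed set which underlies a non-unital star subalgebra. -/
def IsCstarSubalgebra (A : Set (H →L[ℂ] H)) : Prop :=
  IsClosed A ∧ ∃ S : NonUnitalStarSubalgebra ℂ (H →L[ℂ] H), (S : Set (H →L[ℂ] H)) = A

/-- An orthogonal projection on `H`. -/
def IsProj (p : H →L[ℂ] H) : Prop := p * p = p ∧ IsSelfAdjoint p

/-- A rank-one operator on `H`. -/
def IsRankOne (p : H →L[ℂ] H) : Prop := Module.finrank ℂ (LinearMap.range (p : H →ₗ[ℂ] H)) = 1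

/-- `B` is a maximal abelian (self-adjoint) subalgebra of `A`: it is commutative, and any
element of `A` commuting with all of `B` lies in `B`. -/
def IsMasaIn (B A : Set (H →L[ℂ] H)) : Prop :=
  B ⊆ A ∧ (∀ b₁ ∈ B, ∀ b₂ ∈ B, b₁ * b₂ = b₂ * b₁) ∧
    ∀ a ∈ A, (∀ b ∈ B, a * b = b * a) → a ∈ B

/-- A minimal projection of `B`: a nonzero projection in `B` whose only subprojections in `B`
are `0` and itself. -/
def IsMinimalProjIn (B : Set (H →L[ℂ] H)) (p : H →L[ℂ] H) : Prop :=
  p ∈ B ∧ IsProj p ∧ p ≠ 0 ∧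
    ∀ q ∈ B, IsProj q → q * p = q → q = 0 ∨ q = p

/-- A conditional expectation from `A` onto `B`: a positive linear contraction restricting to
the identity on `B` and satisfying the `B`-bimodule property. -/
def IsCondExp (A B : Set (H →L[ℂ] H)) (E : (H →L[ℂ] H) → H →L[ℂ] H) : Prop :=
  (∀ a ∈ A, E a ∈ B) ∧
  (∀ a ∈ A, ∀ b ∈ A, E (a + b) = E a + E b) ∧
  (∀ (c : ℂ), ∀ a ∈ A, E (c • a) = c • E a) ∧
  (∀ a ∈ A, ‖E a‖ ≤ ‖a‖) ∧
  (∀ a ∈ A, a.IsPositive → (E a).IsPositive) ∧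
  (∀ b ∈ B, E b = b) ∧
  (∀ b₁ ∈ B, ∀ b₂ ∈ B, ∀ a ∈ A, E (b₁ * a * b₂) = b₁ * E a * b₂)

/-- A faithful conditional expectation. -/
def IsFaithfulCondExp (A B : Set (H →L[ℂ] H)) (E : (H →L[ℂ] H) → H →L[ℂ] H) : Prop :=
  IsCondExp A B E ∧ ∀ a ∈ A, E (star a * a) = 0 → a = 0

/-- The normaliser of `B` in `A`. -/
def NormalizerIn (A B : Set (H →L[ℂ] H)) : Set (H →L[ℂ] H) :=
  {a ∈ A | ∀ b ∈ B, a * b * star a ∈ B ∧ star a * b * a ∈ B}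

/-- `B` contains an approximate unit for `A`: there is a net in `B` which converges in norm to
the identity when multiplied against any element of `A`. -/
def HasApproxUnitIn (B A : Set (H →L[ℂ] H)) : Prop :=
  ∃ (ι : Type) (l : Filter ι) (e : ι → H →L[ℂ] H), l.NeBot ∧ (∀ i, e i ∈ B) ∧
    ∀ a ∈ A, Tendsto (fun i => e i * a) l (nhds a) ∧ Tendsto (fun i => a * e i) l (nhds a)

/-- The C*-algebra generated by a set `S` of operators: the norm closure of the star
subalgebra generated by `S`. -/
def CstarGen (S : Set (H →L[ℂ] H)) : Set (H →L[ℂ] H) :=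
  closure ((NonUnitalStarAlgebra.adjoin ℂ S :
    NonUnitalStarSubalgebra ℂ (H →L[ℂ] H)) : Set (H →L[ℂ] H))

/-- The von Neumann algebra generated by a (self-adjoint) set: its double commutant. -/
def WStar (S : Set (H →L[ℂ] H)) : Set (H →L[ℂ] H) := Set.centralizer (Set.centralizer S)

/-- `B` is a Cartan subalgebra of `A` (Renault): a MASA containing an approximate unit for `A`,
whose normaliser generates `A` as a C*-algebra, and which is the image of a faithful
conditional expectation. -/
def IsCartanIn (B A : Set (H →L[ℂ] H)) : Prop :=
  IsCstarSubalgebra A ∧ IsCstarSubalgebra B ∧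
  IsMasaIn B A ∧ HasApproxUnitIn B A ∧
  CstarGen (NormalizerIn A B) = A ∧
  ∃ E, IsFaithfulCondExp A B E

/-- `B ⊆ A` is co-separable: `A` is generated as a C*-algebra by `B` together with countably
many elements of `A`. -/
def CoSeparableIn (B A : Set (H →L[ℂ] H)) : Prop :=
  ∃ S : Set (H →L[ℂ] H), S.Countable ∧ S ⊆ A ∧ CstarGen (S ∪ B) = A

/-- A complete orthogonal family of rank-one projections: mutually orthogonal rank-one
projections whose ranges span a dense subspace of `H`. -/
def IsCompleteRankOneFamily {I : Type v} (p : I → H →L[ℂ] H) : Prop :=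
  (∀ i, IsProj (p i) ∧ IsRankOne (p i)) ∧
  (∀ i j, i ≠ j → p i * p j = 0) ∧
  Dense ((⨆ i, LinearMap.range (p i : H →ₗ[ℂ] H) : Submodule ℂ H) : Set H)

/-- A complete orthogonal family of projections: mutually orthogonal projections summing
strongly to the identity. -/
def IsCompleteProjFamily {I : Type v} (q : I → H →L[ℂ] H) : Prop :=
  (∀ i, IsProj (q i)) ∧ (∀ i j, i ≠ j → q i * q j = 0) ∧
  ∀ v : H, HasSum (fun i => q i v) v

/-- `B` is abstractly *-isomorphic to `ℓ∞(I)`. -/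
def AbstractlyLinf (B : Set (H →L[ℂ] H)) (I : Type v) : Prop :=
  ∃ SB : NonUnitalStarSubalgebra ℂ (H →L[ℂ] H), (SB : Set (H →L[ℂ] H)) = B ∧
    Nonempty (SB ≃⋆ₐ[ℂ] lp (fun _ : I => ℂ) ∞)

/-- A *-automorphism of the set `A` of operators. -/
def IsStarAutoOn (A : Set (H →L[ℂ] H)) (α : (H →L[ℂ] H) → H →L[ℂ] H) : Prop :=
  Set.BijOn α A A ∧
  (∀ a ∈ A, ∀ b ∈ A, α (a + b) = α a + α b) ∧
  (∀ a ∈ A, ∀ b ∈ A, α (a * b) = α a * α b) ∧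
  (∀ (c : ℂ), ∀ a ∈ A, α (c • a) = c • α a) ∧
  ∀ a ∈ A, α (star a) = star (α a)

/-! ### `ℓ²(X)` and uniform Roe algebras -/

/-- `ℓ²(X)` with complex coefficients. -/
abbrev ell2 (X : Type v) : Type v := lp (fun _ : X => ℂ) 2

/-- The canonical basis vector `δ_x` of `ℓ²(X)`. -/
def delta {X : Type v} (x : X) : ell2 X :=
  letI := Classical.decEq X
  lp.single 2 x 1

/-- The `(x,y)` matrix entry `⟨δ_x, a δ_y⟩` of an operator `a` on `ℓ²(X)`. -/
def matEntry {X : Type v} (a : ell2 X →L[ℂ] ell2 X) (x y : X) : ℂ := a (delta y) x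

/-- The support of an operator on `ℓ²(X)`. -/
def opSupport {X : Type v} (a : ell2 X →L[ℂ] ell2 X) : Set (X × X) :=
  {q | matEntry a q.1 q.2 ≠ 0}

/-- `a` is a multiplication operator by a (necessarily bounded) function `X → ℂ`. -/
def IsDiagonalOp {X : Type v} (a : ell2 X →L[ℂ] ell2 X) : Prop :=
  ∃ f : X → ℂ, ∀ (ξ : ell2 X) (x : X), a ξ x = f x * ξ x

/-- The copy of `ℓ∞(X)` inside `B(ℓ²(X))`, i.e. the multiplication operators. -/
def LinfOps (X : Type v) : Set (ell2 X →L[ℂ] ell2 X) := {a | IsDiagonalOp a}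

/-- Finite propagation with respect to a metric. -/
def HasFinitePropagation {X : Type v} [MetricSpace X] (a : ell2 X →L[ℂ] ell2 X) : Prop :=
  ∃ r : ℝ, ∀ x y : X, matEntry a x y ≠ 0 → dist x y ≤ r

/-- The uniform Roe algebra of a metric space: the norm closure of the finite propagation
operators on `ℓ²(X)`. -/
def RoeAlgebra (X : Type v) [MetricSpace X] : Set (ell2 X →L[ℂ] ell2 X) :=
  closure {a : ell2 X →L[ℂ] ell2 X | HasFinitePropagation a}

/-- A metric space has bounded geometry if balls of any fixed radius have uniformly
bounded (finite) cardinality. -/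
def BoundedGeometry (X : Type v) [MetricSpace X] : Prop :=
  ∀ r : ℝ, ∃ N : ℕ, ∀ x : X,
    (Metric.closedBall x r).Finite ∧ (Metric.closedBall x r).ncard ≤ N

/-! ### Coarse structures -/

/-- A coarse structure on a set `X` (Roe). -/
structure CoarseStructure (X : Type v) where
  sets : Set (Set (X × X))
  diag_mem : {q : X × X | q.1 = q.2} ∈ sets
  union_mem : ∀ ⦃E F⦄, E ∈ sets → F ∈ sets → E ∪ F ∈ sets
  comp_mem : ∀ ⦃E F⦄, E ∈ sets → F ∈ sets →
    {q : X × X | ∃ y, (q.1, y) ∈ E ∧ (y, q.2) ∈ F} ∈ sets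
  inv_mem : ∀ ⦃E⦄, E ∈ sets → {q : X × X | (q.2, q.1) ∈ E} ∈ sets
  subset_mem : ∀ ⦃E F⦄, E ∈ sets → F ⊆ E → F ∈ sets

/-- Bounded geometry: slices of every entourage have uniformly bounded cardinality. -/
def CoarseStructure.BoundedGeometry {X : Type v} (𝓔 : CoarseStructure X) : Prop :=
  ∀ E ∈ 𝓔.sets, ∃ k : ℕ, ∀ x : X,
    ({y | (x, y) ∈ E}.Finite ∧ {y | (x, y) ∈ E}.ncard ≤ k) ∧
    ({y | (y, x) ∈ E}.Finite ∧ {y | (y, x) ∈ E}.ncard ≤ k)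

/-- Connectedness of a coarse structure. -/
def CoarseStructure.Connected {X : Type v} (𝓔 : CoarseStructure X) : Prop :=
  ∀ x y : X, ({(x, y)} : Set (X × X)) ∈ 𝓔.sets

/-- `𝓔` is the coarse structure generated by the family `S`. -/
def CoarseStructure.IsGeneratedBy {X : Type v} (𝓔 : CoarseStructure X)
    (S : Set (Set (X × X))) : Prop :=
  S ⊆ 𝓔.sets ∧ ∀ 𝓓 : CoarseStructure X, S ⊆ 𝓓.sets → 𝓔.sets ⊆ 𝓓.sets

/-- The uniform Roe algebra of a coarse space. -/
def CoarseRoeAlgebra (X : Type v) (𝓔 : CoarseStructure X) :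
    Set (ell2 X →L[ℂ] ell2 X) :=
  closure {a : ell2 X →L[ℂ] ell2 X | opSupport a ∈ 𝓔.sets}

/-! ### The coarse structure attached to a Cartan pair -/

/-- The set of minimal projections of `B`, as a type. -/
abbrev MinProj (B : Set (H →L[ℂ] H)) : Type u := {p : H →L[ℂ] H // IsMinimalProjIn B p}

/-- The generating entourages `E_{a,ε}` of the coarse structure of a Cartan pair. -/
def cartanEntourages (A B : Set (H →L[ℂ] H)) : Set (Set (MinProj B × MinProj B)) :=
  {E | ∃ a ∈ NormalizerIn A B, ∃ ε : ℝ, 0 < ε ∧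
    E = {q : MinProj B × MinProj B |
          ε ≤ ‖(q.1 : H →L[ℂ] H) * a * (q.2 : H →L[ℂ] H)‖}}

/-- Conjugation of an operator on `H` to an operator on `ℓ²(X)` by a unitary
`u : ℓ²(X) → H`, i.e. `a ↦ u* a u`. -/
def conjDown {X : Type v} (u : ell2 X ≃ₗᵢ[ℂ] H) (a : H →L[ℂ] H) :
    ell2 X →L[ℂ] ell2 X :=
  ((u.symm.toContinuousLinearEquiv : H →L[ℂ] ell2 X).comp a).comp
    (u.toContinuousLinearEquiv : ell2 X →L[ℂ] H)

/-- Conjugation of an operator on `ℓ²(X)` to an operator on `H` by a unitary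
`u : ℓ²(X) → H`, i.e. `a ↦ u a u*`. -/
def conjUp {X : Type v} (u : ell2 X ≃ₗᵢ[ℂ] H) (a : ell2 X →L[ℂ] ell2 X) :
    H →L[ℂ] H :=
  ((u.toContinuousLinearEquiv : ell2 X →L[ℂ] H).comp a).comp
    (u.symm.toContinuousLinearEquiv : H →L[ℂ] ell2 X)

/-! ### Coarse maps -/

/-- A uniformly expansive map between metric spaces. -/
def UniformlyExpansive {X : Type u} {Y : Type v} [MetricSpace X] [MetricSpace Y]
    (f : X → Y) : Prop :=
  ∀ r : ℝ, ∃ s : ℝ, ∀ x x' : X, dist x x' ≤ r → dist (f x) (f x') ≤ s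

/-- Two maps into a metric space are close. -/
def Close {X : Type u} {Y : Type v} [MetricSpace Y] (f g : X → Y) : Prop :=
  ∃ C : ℝ, ∀ x : X, dist (f x) (g x) ≤ C

/-- A coarse equivalence between metric spaces. -/
def IsCoarseEquivalence {X : Type u} {Y : Type v} [MetricSpace X] [MetricSpace Y]
    (f : X → Y) : Prop :=
  UniformlyExpansive f ∧ ∃ g : Y → X, UniformlyExpansive g ∧
    Close (fun x => g (f x)) (fun x => x) ∧ Close (fun y => f (g y)) (fun y => y)

/-- `X` and `Y` are coarsely equivalent. -/
def CoarselyEquivalent (X : Type u) (Y : Type v) [MetricSpace X] [MetricSpace Y] : Prop :=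
  ∃ f : X → Y, IsCoarseEquivalence f

/-- A coarse embedding between metric spaces. -/
def IsCoarseEmbedding {X : Type u} {Y : Type v} [MetricSpace X] [MetricSpace Y]
    (f : X → Y) : Prop :=
  ∃ ρminus ρplus : ℝ → ℝ, Monotone ρminus ∧ Monotone ρplus ∧
    Tendsto ρminus atTop atTop ∧
    ∀ x x' : X, ρminus (dist x x') ≤ dist (f x) (f x') ∧
      dist (f x) (f x') ≤ ρplus (dist x x')

/-- `X` coarsely embeds into a (real) Hilbert space. -/
def CoarselyEmbeddableIntoHilbert (X : Type v) [MetricSpace X] : Prop :=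
  ∃ (E : Type) (iE : NormedAddCommGroup E)
    (_ : @InnerProductSpace ℝ E _ iE.toSeminormedAddCommGroup)
    (_ : @CompleteSpace E iE.toMetricSpace.toPseudoMetricSpace.toUniformSpace)
    (f : X → E),
    @IsCoarseEmbedding X E _ iE.toMetricSpace f

/-- The `r`-boundary of a subset of a metric space (Block–Weinberger). -/
def rBoundary {X : Type v} [MetricSpace X] (r : ℝ) (S : Set X) : Set X :=
  {x : X | (∃ s ∈ S, dist x s ≤ r) ∧ ∃ t ∉ S, dist x t ≤ r}

/-- Amenability in the sense of Block and Weinberger. -/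
def BWAmenable (X : Type v) [MetricSpace X] : Prop :=
  ∀ r > (0 : ℝ), ∀ ε > (0 : ℝ), ∃ S : Set X, S.Finite ∧ S.Nonempty ∧
    ((rBoundary r S).ncard : ℝ) ≤ ε * S.ncard

/-- Yu's property A. -/
def PropertyA (X : Type v) [MetricSpace X] : Prop :=
  ∀ r > (0 : ℝ), ∀ ε > (0 : ℝ), ∃ S > (0 : ℝ), ∃ ξ : X → ell2 X,
    (∀ x : X, ‖ξ x‖ = 1) ∧
    (∀ x y : X, ξ x y ≠ 0 → dist x y ≤ S) ∧
    ∀ x y : X, dist x y ≤ r → ‖ξ x - ξ y‖ ≤ ε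

/-- A *-isomorphism between the uniform Roe algebras of `X` and `Y`. -/
def IsStarIsoBetween (X : Type u) (Y : Type v) [MetricSpace X] [MetricSpace Y]
    (φ : (ell2 X →L[ℂ] ell2 X) → ell2 Y →L[ℂ] ell2 Y) : Prop :=
  Set.BijOn φ (RoeAlgebra X) (RoeAlgebra Y) ∧
  (∀ a ∈ RoeAlgebra X, ∀ b ∈ RoeAlgebra X, φ (a + b) = φ a + φ b) ∧
  (∀ a ∈ RoeAlgebra X, ∀ b ∈ RoeAlgebra X, φ (a * b) = φ a * φ b) ∧
  (∀ (c : ℂ), ∀ a ∈ RoeAlgebra X, φ (c • a) = c • φ a) ∧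
  ∀ a ∈ RoeAlgebra X, φ (star a) = star (φ a)

end RoeCartan

namespace RoeCartan


open Set Function

/-- Schröder–Bernstein with pointwise control. -/
theorem sb_pointwise {α : Type*} {β : Type*} {f : α → β} {g : β → α}
    (hf : Function.Injective f) (hg : Function.Injective g) :
    ∃ h : α → β, Bijective h ∧ ∀ a, h a = f a ∨ g (h a) = a := by
  classical
  cases' isEmpty_or_nonempty β with hβ hβ
  · have : IsEmpty α := Function.isEmpty f
    refine ⟨f, ⟨hf, fun b => (this.elim (g b) : _)⟩, fun a => (this.elim a : _)⟩
  set F : Set α →o Set α :=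
    { toFun := fun s => (g '' (f '' s)ᶜ)ᶜ
      monotone' := fun s t hst =>
        compl_subset_compl.mpr <| image_mono <| compl_subset_compl.mpr <| image_mono hst }
  set s : Set α := F.lfp
  have hs : (g '' (f '' s)ᶜ)ᶜ = s := F.map_lfp
  have hns : g '' (f '' s)ᶜ = sᶜ := compl_injective (by simp [hs])
  set g' := invFun g
  have g'g : LeftInverse g' g := leftInverse_invFun hg
  have hg'ns : g' '' sᶜ = (f '' s)ᶜ := by rw [← hns, g'g.image_image]
  set h : α → β := s.piecewise f g'
  have hsurj : Surjective h := by rw [← range_eq_univ, range_piecewise, hg'ns, union_compl_self]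
  have hinj : Injective h := by
    refine (injective_piecewise_iff _).2 ⟨hf.injOn, ?_, ?_⟩
    · intro x hx y hy hxy
      obtain ⟨x', _, rfl⟩ : x ∈ g '' (f '' s)ᶜ := by rwa [hns]
      obtain ⟨y', _, rfl⟩ : y ∈ g '' (f '' s)ᶜ := by rwa [hns]
      rw [g'g _, g'g _] at hxy
      rw [hxy]
    · intro x hx y hy hxy
      obtain ⟨y', hy', rfl⟩ : y ∈ g '' (f '' s)ᶜ := by rwa [hns]
      rw [g'g _] at hxy
      exact hy' ⟨x, hx, hxy⟩
  refine ⟨h, ⟨hinj, hsurj⟩, fun a => ?_⟩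
  by_cases ha : a ∈ s
  · left; simp [h, Set.piecewise_eq_of_mem _ _ _ ha]
  · right
    obtain ⟨b, _, rfl⟩ : a ∈ g '' (f '' s)ᶜ := by rwa [hns]
    simp [h, Set.piecewise_eq_of_notMem _ _ _ ha, g'g b]






variable {Z : Type*} [MetricSpace Z]

/-- `R`-neighbourhood of a set. -/
def nbhd (R : ℝ) (S : Set Z) : Set Z := {z | ∃ s ∈ S, dist z s ≤ R}

lemma subset_nbhd {R : ℝ} (hR : 0 ≤ R) (S : Set Z) : S ⊆ nbhd R S :=
  fun s hs => ⟨s, hs, by simpa using hR⟩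

lemma nbhd_finite (hbg : BoundedGeometry Z) {R : ℝ} {S : Set Z} (hS : S.Finite) :
    (nbhd R S).Finite := by
  have : nbhd R S ⊆ ⋃ s ∈ S, Metric.closedBall s R := by
    rintro z ⟨s, hs, hzs⟩
    exact Set.mem_biUnion hs (Metric.mem_closedBall.2 hzs)
  exact (hS.biUnion fun s _ => (hbg R).choose_spec s |>.1).subset this

lemma nbhd_mono {R : ℝ} {S T : Set Z} (h : S ⊆ T) : nbhd R S ⊆ nbhd R T := by
  rintro z ⟨s, hs, hzs⟩; exact ⟨s, h hs, hzs⟩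

lemma nbhd_nbhd {R r : ℝ} {S : Set Z} : nbhd r (nbhd R S) ⊆ nbhd (R + r) S := by
  rintro z ⟨w, ⟨s, hs, hws⟩, hzw⟩
  exact ⟨s, hs, by linarith [dist_triangle z w s]⟩

/-- Counting with fibers of size at most `k`. -/
lemma ncard_le_mul_of_fibers {A B : Type*} {S : Set A} (hS : S.Finite)
    (φ : A → B) (k : ℕ) (hk : ∀ b, ({a ∈ S | φ a = b}).ncard ≤ k) :
    S.ncard ≤ k * (φ '' S).ncard := by
  classical
  have h1 : S.ncard = hS.toFinset.card := Set.ncard_eq_toFinset_card S hS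
  have h2 : (φ '' S).ncard = (hS.toFinset.image φ).card := by
    rw [← Set.ncard_coe_finset (hS.toFinset.image φ)]
    congr 1
    simp [Finset.coe_image, hS.coe_toFinset]
  rw [h1, h2]
  refine Finset.card_le_mul_card_image _ k ?_
  intro b _
  calc ({a ∈ hS.toFinset | φ a = b} : Finset A).card
      = ({a ∈ S | φ a = b}).ncard := by
        rw [← Set.ncard_coe_finset]
        congr 1
        ext a; simp [hS.mem_toFinset]
    _ ≤ k := hk b

/-- Bounded geometry: sets with bounded-diameter fibers lose at most a factor `k` in cardinality
under a map. -/
lemma exists_fiber_bound (hbg : BoundedGeometry Z) {W : Type*} (φ : Z → W) (c : ℝ)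
    (hc : ∀ x x', φ x = φ x' → dist x x' ≤ c) :
    ∃ k : ℕ, 0 < k ∧ ∀ S : Set Z, S.Finite → S.ncard ≤ k * (φ '' S).ncard := by
  obtain ⟨N, hN⟩ := hbg c
  refine ⟨N + 1, Nat.succ_pos N, fun S hS => ?_⟩
  refine ncard_le_mul_of_fibers hS φ (N + 1) fun b => ?_
  rcases Set.eq_empty_or_nonempty {a ∈ S | φ a = b} with he | ⟨x₀, hx₀⟩
  · simp [he]
  have hsub : {a ∈ S | φ a = b} ⊆ Metric.closedBall x₀ c := by
    rintro a ⟨_, ha⟩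
    exact Metric.mem_closedBall.2 (hc a x₀ (ha.trans hx₀.2.symm))
  exact le_trans (Set.ncard_le_ncard hsub (hN x₀).1) ((hN x₀).2.trans (Nat.le_succ N))

/-- Expansion from non-amenability: neighbourhoods grow by any prescribed factor. -/
lemma expansion (hbg : BoundedGeometry Z) (hna : ¬ BWAmenable Z) (m : ℕ) :
    ∃ R : ℝ, 0 ≤ R ∧ ∀ S : Set Z, S.Finite → S.Nonempty →
      (m : ℝ) * S.ncard ≤ ((nbhd R S).ncard : ℝ) := by
  simp only [BWAmenable, not_forall] at hna
  obtain ⟨r, hr, ε, hε, hbad⟩ := hna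
  push_neg at hbad
  obtain ⟨N, hN⟩ := hbg r
  set δ : ℝ := ε / (N + 1) with hδdef
  have hN1 : (0:ℝ) < N + 1 := by positivity
  have hδ : 0 < δ := div_pos hε hN1
  have step : ∀ T : Set Z, T.Finite → T.Nonempty →
      (1 + δ) * T.ncard ≤ ((nbhd r T).ncard : ℝ) := by
    intro T hT hTne
    have hnbT : (nbhd r T).Finite := nbhd_finite hbg hT
    have hTsub : T ⊆ nbhd r T := subset_nbhd hr.le T
    have hbd := hbad T hT hTne
    have hfinB : ((nbhd r T) \ T).Finite := hnbT.diff
    have hfinb : (rBoundary r T).Finite := by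
      refine hnbT.subset ?_
      rintro x ⟨⟨s, hs, hxs⟩, -⟩; exact ⟨s, hs, hxs⟩
    have hsplit : (rBoundary r T).ncard ≤ (N + 1) * ((nbhd r T) \ T).ncard := by
      classical
      have h1 : (rBoundary r T).ncard ≤ ((rBoundary r T) ∩ T).ncard
          + ((nbhd r T) \ T).ncard := by
        refine le_trans (Set.ncard_le_ncard (show rBoundary r T ⊆
            ((rBoundary r T) ∩ T) ∪ ((nbhd r T) \ T) from ?_)
            ((hfinb.inter_of_left T).union hfinB)) (Set.ncard_union_le _ _)
        intro x hx
        by_cases hxT : x ∈ T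
        · exact Or.inl ⟨hx, hxT⟩
        · exact Or.inr ⟨⟨_, hx.1.choose_spec.1, hx.1.choose_spec.2⟩, hxT⟩
      have h2 : ((rBoundary r T) ∩ T).ncard ≤ N * ((nbhd r T) \ T).ncard := by
        set A := (rBoundary r T) ∩ T with hA
        have hAfin : A.Finite := hfinb.inter_of_left T
        have hwit : ∀ a ∈ A, ∃ t, t ∉ T ∧ dist a t ≤ r := by
          rintro a ⟨⟨-, t, htT, hat⟩, -⟩; exact ⟨t, htT, hat⟩
        choose! w hw1 hw2 using hwit
        have himg : w '' A ⊆ (nbhd r T) \ T := by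
          rintro t ⟨a, ha, rfl⟩
          exact ⟨⟨a, ha.2, dist_comm (w a) a ▸ hw2 a ha⟩, hw1 a ha⟩
        calc A.ncard ≤ N * (w '' A).ncard := by
              refine ncard_le_mul_of_fibers hAfin w N fun b => ?_
              have hsub : {a ∈ A | w a = b} ⊆ Metric.closedBall b r := by
                rintro a ⟨haA, rfl⟩
                exact Metric.mem_closedBall.2 (hw2 a haA)
              exact le_trans (Set.ncard_le_ncard hsub (hN b).1) (hN b).2
          _ ≤ N * ((nbhd r T) \ T).ncard :=
              Nat.mul_le_mul_left N (Set.ncard_le_ncard himg hfinB)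
      calc (rBoundary r T).ncard ≤ ((rBoundary r T) ∩ T).ncard + ((nbhd r T) \ T).ncard := h1
        _ ≤ N * ((nbhd r T) \ T).ncard + ((nbhd r T) \ T).ncard := Nat.add_le_add_right h2 _
        _ = (N + 1) * ((nbhd r T) \ T).ncard := by ring
    have hle : T.ncard ≤ (nbhd r T).ncard := Set.ncard_le_ncard hTsub hnbT
    have hdiff : (((nbhd r T) \ T).ncard : ℝ) = (nbhd r T).ncard - T.ncard := by
      rw [Set.ncard_diff hTsub hT]
      push_cast [Nat.cast_sub hle]
      ring
    have key : ε * T.ncard ≤ (N + 1 : ℝ) * (((nbhd r T).ncard : ℝ) - T.ncard) := by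
      calc ε * T.ncard ≤ ((rBoundary r T).ncard : ℝ) := le_of_lt hbd
        _ ≤ (((N + 1) * ((nbhd r T) \ T).ncard : ℕ) : ℝ) := by exact_mod_cast hsplit
        _ = (N + 1 : ℝ) * (((nbhd r T).ncard : ℝ) - T.ncard) := by push_cast [hdiff]; ring
    have hδT : δ * T.ncard ≤ ((nbhd r T).ncard : ℝ) - T.ncard := by
      rw [hδdef, div_mul_eq_mul_div, div_le_iff₀ hN1]
      calc ε * T.ncard ≤ (N + 1 : ℝ) * (((nbhd r T).ncard : ℝ) - T.ncard) := key
        _ = (((nbhd r T).ncard : ℝ) - T.ncard) * (N + 1) := by ring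
    nlinarith [hδT]
  -- iterate
  obtain ⟨n, hn⟩ := pow_unbounded_of_one_lt (m : ℝ) (by linarith : (1:ℝ) < 1 + δ)
  refine ⟨n * r, by positivity, fun S hS hSne => ?_⟩
  have iter : ∀ j : ℕ, (1 + δ) ^ j * S.ncard ≤ ((nbhd (j * r) S).ncard : ℝ) := by
    intro j
    induction j with
    | zero =>
        simp only [pow_zero, one_mul, Nat.cast_zero, zero_mul]
        exact_mod_cast Nat.cast_le.2
          (Set.ncard_le_ncard (subset_nbhd le_rfl S) (nbhd_finite hbg hS))
    | succ j ih =>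
        have hjr : (0:ℝ) ≤ j * r := by positivity
        have hfinj : (nbhd (j * r) S).Finite := nbhd_finite hbg hS
        have hnej : (nbhd (j * r) S).Nonempty := hSne.mono (subset_nbhd hjr S)
        have hstep := step _ hfinj hnej
        have hmono : ((nbhd r (nbhd (j * r) S)).ncard : ℝ)
            ≤ ((nbhd ((j + 1 : ℕ) * r) S).ncard : ℝ) := by
          have hsub : nbhd r (nbhd (j * r) S) ⊆ nbhd ((j + 1 : ℕ) * r) S := by
            refine subset_trans nbhd_nbhd ?_
            have : ((j : ℝ) * r + r) = ((j + 1 : ℕ) : ℝ) * r := by push_cast; ring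
            rw [this]
          exact_mod_cast Nat.cast_le.2 (Set.ncard_le_ncard hsub (nbhd_finite hbg hS))
        calc (1 + δ) ^ (j + 1) * S.ncard = (1 + δ) * ((1 + δ) ^ j * S.ncard) := by ring
          _ ≤ (1 + δ) * ((nbhd (j * r) S).ncard : ℝ) := by
              have h1δ : (0:ℝ) ≤ 1 + δ := by linarith
              exact mul_le_mul_of_nonneg_left ih h1δ
          _ ≤ ((nbhd r (nbhd (j * r) S)).ncard : ℝ) := hstep
          _ ≤ _ := hmono
  have hSn : (1:ℝ) ≤ S.ncard := by
    have : 0 < S.ncard := (Set.ncard_pos hS).2 hSne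
    exact_mod_cast this
  calc (m : ℝ) * S.ncard ≤ (1 + δ) ^ n * S.ncard := by
        have := le_of_lt hn
        nlinarith
    _ ≤ _ := iter n





/-- Hall's theorem wrapper for relations with finite neighbourhoods. -/
lemma exists_injection_of_rel {A : Type*} {B : Type*} (rel : A → B → Prop)
    (hfin : ∀ a, {b | rel a b}.Finite)
    (hall : ∀ s : Finset A, s.card ≤ {b | ∃ a ∈ s, rel a b}.ncard) :
    ∃ i : A → B, Function.Injective i ∧ ∀ a, rel a (i a) := by
  classical
  set t : A → Finset B := fun a => (hfin a).toFinset with ht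
  have hhall : ∀ s : Finset A, s.card ≤ (s.biUnion t).card := by
    intro s
    refine le_trans (hall s) (le_of_eq ?_)
    rw [← Set.ncard_coe_finset (s.biUnion t)]
    congr 1
    ext b
    simp [ht, Set.Finite.mem_toFinset]
  obtain ⟨i, hi, hit⟩ := (Finset.all_card_le_biUnion_card_iff_exists_injective t).1 hhall
  exact ⟨i, hi, fun a => (hfin a).mem_toFinset.1 (hit a)⟩

/-- A map close to a coarse equivalence is a coarse equivalence. -/
lemma coarse_of_close {X : Type u} {Y : Type v} [MetricSpace X] [MetricSpace Y]
    {f h : X → Y} (hf : IsCoarseEquivalence f) (hcl : Close f h) :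
    IsCoarseEquivalence h := by
  obtain ⟨C, hC⟩ := hcl
  obtain ⟨huef, g, hueg, ⟨C₁, hC₁⟩, ⟨C₂, hC₂⟩⟩ := hf
  obtain ⟨sC, hsC⟩ := hueg C
  refine ⟨?_, g, hueg, ⟨sC + C₁, fun x => ?_⟩, ⟨C + C₂, fun y => ?_⟩⟩
  · intro r
    obtain ⟨s, hs⟩ := huef r
    refine ⟨C + s + C, fun x x' hxx => ?_⟩
    calc dist (h x) (h x') ≤ dist (h x) (f x) + dist (f x) (h x') := dist_triangle _ _ _
      _ ≤ dist (h x) (f x) + (dist (f x) (f x') + dist (f x') (h x')) :=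
          add_le_add_right (dist_triangle _ _ _) _
      _ ≤ C + (s + C) := by
          have := hC x; have := hC x'; have := hs x x' hxx
          rw [dist_comm (h x) (f x), dist_comm (f x') (h x')] at *
          linarith
      _ = C + s + C := by ring
  · calc dist (g (h x)) x ≤ dist (g (h x)) (g (f x)) + dist (g (f x)) x := dist_triangle _ _ _
      _ ≤ sC + C₁ := by
          have h1 : dist (g (h x)) (g (f x)) ≤ sC := by
            refine hsC _ _ ?_
            rw [dist_comm]; exact hC x
          have h2 := hC₁ x
          simp only at h2
          linarith
  · calc dist (h (g y)) y ≤ dist (h (g y)) (f (g y)) + dist (f (g y)) y := dist_triangle _ _ _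
      _ ≤ C + C₂ := by
          have h1 : dist (h (g y)) (f (g y)) ≤ C := by rw [dist_comm]; exact hC (g y)
          have h2 := hC₂ y
          simp only at h2
          linarith

/-- Key lemma: if the target is non-amenable, a coarse equivalence is close to a bijection. -/
lemma close_bijection {X : Type u} {Y : Type v} [MetricSpace X] [MetricSpace Y]
    (hbgX : BoundedGeometry X) (hbgY : BoundedGeometry Y)
    (hnaY : ¬ BWAmenable Y) (f : X → Y) (hf : IsCoarseEquivalence f) :
    ∃ h : X → Y, Function.Bijective h ∧ Close f h := by
  classical
  obtain ⟨huef, g, hueg, ⟨C₁, hC₁⟩, ⟨C₂, hC₂⟩⟩ := hf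
  simp only at hC₁ hC₂
  -- fiber bounds
  obtain ⟨k₁, hk₁pos, hk₁⟩ := exists_fiber_bound hbgX f (2 * C₁) (fun x x' hxx => by
    calc dist x x' ≤ dist x (g (f x)) + dist (g (f x)) x' := dist_triangle _ _ _
      _ ≤ 2 * C₁ := by
          have h1 := hC₁ x; have h2 := hC₁ x'
          rw [hxx] at h1 ⊢
          rw [dist_comm x (g (f x'))] at *
          linarith)
  obtain ⟨k₂, hk₂pos, hk₂⟩ := exists_fiber_bound hbgY g (2 * C₂) (fun y y' hyy => by
    calc dist y y' ≤ dist y (f (g y)) + dist (f (g y)) y' := dist_triangle _ _ _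
      _ ≤ 2 * C₂ := by
          have h1 := hC₂ y; have h2 := hC₂ y'
          rw [hyy] at h1 ⊢
          rw [dist_comm y (f (g y'))] at *
          linarith)
  obtain ⟨R₁, hR₁, hexp₁⟩ := expansion hbgY hnaY k₁
  obtain ⟨R₂, hR₂, hexp₂⟩ := expansion hbgY hnaY k₂
  -- injection X → Y
  have hihall : ∀ s : Finset X, s.card ≤ {y | ∃ x ∈ s, dist (f x) y ≤ R₁}.ncard := by
    intro s
    rcases s.eq_empty_or_nonempty with rfl | hsne
    · simp
    set S : Set X := ↑s with hS
    have hSfin : S.Finite := s.finite_toSet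
    have hSne : S.Nonempty := by exact_mod_cast hsne
    have hffin : (f '' S).Finite := hSfin.image f
    have hfne : (f '' S).Nonempty := hSne.image f
    have htgtfin : {y | ∃ x ∈ s, dist (f x) y ≤ R₁}.Finite := by
      refine (hSfin.biUnion (fun x _ => ((hbgY R₁).choose_spec (f x)).1)).subset ?_
      rintro y ⟨x, hx, hxy⟩
      exact Set.mem_biUnion (show x ∈ S from hx)
        (Metric.mem_closedBall.2 (by simpa [dist_comm] using hxy))
    have hsub : nbhd R₁ (f '' S) ⊆ {y | ∃ x ∈ s, dist (f x) y ≤ R₁} := by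
      rintro y ⟨b, ⟨x, hxS, rfl⟩, hyb⟩
      exact ⟨x, hxS, by simpa [dist_comm] using hyb⟩
    have hchain : (s.card : ℝ) ≤ ({y | ∃ x ∈ s, dist (f x) y ≤ R₁}.ncard : ℝ) := by
      calc (s.card : ℝ) = (S.ncard : ℝ) := by rw [hS, Set.ncard_coe_finset]
        _ ≤ ((k₁ * (f '' S).ncard : ℕ) : ℝ) := by exact_mod_cast hk₁ S hSfin
        _ = (k₁ : ℝ) * ((f '' S).ncard : ℝ) := by push_cast; ring
        _ ≤ ((nbhd R₁ (f '' S)).ncard : ℝ) := hexp₁ _ hffin hfne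
        _ ≤ _ := by exact_mod_cast Set.ncard_le_ncard hsub htgtfin
    exact_mod_cast hchain

  obtain ⟨i, hiinj, hirel⟩ := exists_injection_of_rel (fun x y => dist (f x) y ≤ R₁)
    (fun x => ((hbgY R₁).choose_spec (f x)).1.subset (fun y hy =>
      Metric.mem_closedBall.2 (by simpa [dist_comm] using hy)))
    hihall
  -- injection Y → X
  have hjfin : ∀ y, {x | dist y (f x) ≤ R₂ + C₂}.Finite := by
    intro y
    obtain ⟨sg, hsg⟩ := hueg (R₂ + C₂)
    refine ((hbgX (C₁ + sg)).choose_spec (g y)).1.subset (fun x hx => ?_)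
    refine Metric.mem_closedBall.2 ?_
    calc dist x (g y) ≤ dist x (g (f x)) + dist (g (f x)) (g y) := dist_triangle _ _ _
      _ ≤ C₁ + sg := by
          have h1 := hC₁ x
          rw [dist_comm (g (f x)) x] at h1
          have h2 : dist (g (f x)) (g y) ≤ sg := hsg _ _ (by simpa [dist_comm] using hx)
          linarith
  have hjhall : ∀ s : Finset Y, s.card ≤ {x | ∃ y ∈ s, dist y (f x) ≤ R₂ + C₂}.ncard := by
    intro s
    rcases s.eq_empty_or_nonempty with rfl | hsne
    · simp
    set T : Set Y := ↑s with hT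
    have hTfin : T.Finite := s.finite_toSet
    have hTne : T.Nonempty := by exact_mod_cast hsne
    have hnbfin : (nbhd R₂ T).Finite := nbhd_finite hbgY hTfin
    have htgtfin : {x | ∃ y ∈ s, dist y (f x) ≤ R₂ + C₂}.Finite := by
      obtain ⟨sg, hsg⟩ := hueg (R₂ + C₂)
      refine (hTfin.biUnion (fun y _ => ((hbgX (C₁ + sg)).choose_spec (g y)).1)).subset ?_
      rintro x ⟨y, hy, hxy⟩
      refine Set.mem_biUnion (show y ∈ T from hy) (Metric.mem_closedBall.2 ?_)
      calc dist x (g y) ≤ dist x (g (f x)) + dist (g (f x)) (g y) := dist_triangle _ _ _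
        _ ≤ C₁ + sg := by
            have h1 := hC₁ x
            rw [dist_comm (g (f x)) x] at h1
            have h2 : dist (g (f x)) (g y) ≤ sg := hsg _ _ (by simpa [dist_comm] using hxy)
            linarith
    have hsub : g '' nbhd R₂ T ⊆ {x | ∃ y ∈ s, dist y (f x) ≤ R₂ + C₂} := by
      rintro x ⟨z, ⟨y, hyT, hzy⟩, rfl⟩
      refine ⟨y, hyT, ?_⟩
      calc dist y (f (g z)) ≤ dist y z + dist z (f (g z)) := dist_triangle _ _ _
        _ ≤ R₂ + C₂ := by
            have h2 := hC₂ z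
            rw [dist_comm (f (g z)) z] at h2
            rw [dist_comm y z]
            linarith
    have hchain : (k₂ : ℝ) * (s.card : ℝ) ≤ (k₂ : ℝ) * ({x | ∃ y ∈ s, dist y (f x) ≤ R₂ + C₂}.ncard : ℝ) := by
      calc (k₂ : ℝ) * (s.card : ℝ) = (k₂ : ℝ) * (T.ncard : ℝ) := by
            rw [hT, Set.ncard_coe_finset]
        _ ≤ ((nbhd R₂ T).ncard : ℝ) := hexp₂ T hTfin hTne
        _ ≤ ((k₂ * (g '' nbhd R₂ T).ncard : ℕ) : ℝ) := by exact_mod_cast hk₂ _ hnbfin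
        _ ≤ (k₂ : ℝ) * ({x | ∃ y ∈ s, dist y (f x) ≤ R₂ + C₂}.ncard : ℝ) := by
            push_cast
            exact mul_le_mul_of_nonneg_left
              (by exact_mod_cast Set.ncard_le_ncard hsub htgtfin) (by positivity)
    have hk₂R : (0:ℝ) < k₂ := by exact_mod_cast hk₂pos
    have := le_of_mul_le_mul_left hchain hk₂R
    exact_mod_cast this
  obtain ⟨j, hjinj, hjrel⟩ := exists_injection_of_rel (fun y x => dist y (f x) ≤ R₂ + C₂)
    hjfin hjhall
  obtain ⟨h, hbij, hpt⟩ := sb_pointwise hiinj hjinj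
  refine ⟨h, hbij, ⟨max R₁ (R₂ + C₂), fun x => ?_⟩⟩
  rcases hpt x with hx | hx
  · rw [hx]; exact le_max_of_le_left (hirel x)
  · have := hjrel (h x)
    rw [hx, dist_comm] at this
    exact le_max_of_le_right this


/-- Whyte: A coarse equivalence between bounded geometry metric spaces, at
least one of which is non-amenable, is close to a bijective coarse equivalence. -/
theorem stmt16 {X : Type u} {Y : Type v} [MetricSpace X] [MetricSpace Y]
    (hbgX : BoundedGeometry X) (hbgY : BoundedGeometry Y)
    (hna : ¬ BWAmenable X ∨ ¬ BWAmenable Y)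
    (f : X → Y) (hf : IsCoarseEquivalence f) :
    ∃ h : X → Y, Function.Bijective h ∧ IsCoarseEquivalence h ∧ Close f h := by
  rcases hna with hnaX | hnaY
  · -- transfer: apply the key lemma to the coarse inverse
    obtain ⟨huef, g, hueg, ⟨C₁, hC₁⟩, ⟨C₂, hC₂⟩⟩ := hf
    simp only at hC₁ hC₂
    have hg : IsCoarseEquivalence g :=
      ⟨hueg, f, huef, ⟨C₂, hC₂⟩, ⟨C₁, hC₁⟩⟩
    obtain ⟨h', hbij', C, hC⟩ := close_bijection hbgY hbgX hnaX g hg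
    set e : Y ≃ X := Equiv.ofBijective h' hbij' with he
    obtain ⟨s, hs⟩ := huef C
    have hclose : Close f (fun x => e.symm x) := by
      refine ⟨s + C₂, fun x => ?_⟩
      set y : Y := e.symm x with hy
      have hx : h' y = x := e.apply_symm_apply x
      have h1 : dist x (g y) ≤ C := by
        rw [← hx]; rw [dist_comm]; exact hC y
      calc dist (f x) y ≤ dist (f x) (f (g y)) + dist (f (g y)) y := dist_triangle _ _ _
        _ ≤ s + C₂ := add_le_add (hs _ _ h1) (hC₂ y)
    exact ⟨fun x => e.symm x, e.symm.bijective,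
      coarse_of_close ⟨huef, g, hueg, ⟨C₁, hC₁⟩, ⟨C₂, hC₂⟩⟩ hclose, hclose⟩
  · obtain ⟨h, hbij, hcl⟩ := close_bijection hbgX hbgY hnaY f hf
    exact ⟨h, hbij, coarse_of_close hf hcl, hcl⟩


end RoeCartan
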